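/- Let X₀ and X₁ be real Banach spaces and let I : X₀ × X₁ → ℝ be a continuous bilinear map such that both induced continuous linear maps X₁ → X₀* (y ↦ I(·, y)) and X₀ → X₁* (x ↦ I(x, ·)) are surjective. Let B₀ ⊆ X₀ and B₁ ⊆ X₁ be linear subspaces, and set A₀ := B₁^⊥ ⊆ X₀ and A₁ := B₀^⊥ ⊆ X₁; assume B₀ ⊆ A₀ and B₁ ⊆ A₁. Then the induced pairing Ī : (A₀ / closure(B₀)) × (A₁ / closure(B₁)) → ℝ, Ī([a], [α]) := I(a, α), is well defined, continuous, and nondegenerate: for every a ∈ A₀ with [a] ≠ 0 there exists α ∈ A₁ with Ī([a], [α]) ≠ 0, and for every α ∈ A₁ with [α] ≠ 0 there exists a ∈ A₀ with Ī([a], [α]) ≠ 0. -/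

import Mathlib

noncomputable section

variable {X₀ X₁ : Type*}
  [NormedAddCommGroup X₀] [NormedSpace ℝ X₀]
  [NormedAddCommGroup X₁] [NormedSpace ℝ X₁]

/-- The annihilator in `X₁` of a subset `B ⊆ X₀` for the pairing `I`:
`B^⊥ = {y ∈ X₁ | I (x, y) = 0 for all x ∈ B}`. -/
def annRight (I : X₀ →L[ℝ] X₁ →L[ℝ] ℝ) (B : Set X₀) : Submodule ℝ X₁ where
  carrier := {y : X₁ | ∀ x ∈ B, I x y = 0}
  add_mem' := by
    intro a b ha hb x hx
    simp [ha x hx, hb x hx]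
  zero_mem' := by
    intro x hx
    simp
  smul_mem' := by
    intro c a ha x hx
    simp [ha x hx]

/-- The annihilator in `X₀` of a subset `B ⊆ X₁` for the pairing `I`:
`B^⊥ = {x ∈ X₀ | I (x, y) = 0 for all y ∈ B}`. -/
def annLeft (I : X₀ →L[ℝ] X₁ →L[ℝ] ℝ) (B : Set X₁) : Submodule ℝ X₀ where
  carrier := {x : X₀ | ∀ y ∈ B, I x y = 0}
  add_mem' := by
    intro a b ha hb y hy
    simp [ha y hy, hb y hy]
  zero_mem' := by
    intro y hy
    simp
  smul_mem' := by
    intro c a ha y hy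
    simp [ha y hy]

lemma exists_functional_of_notMem_closure {E : Type*} [NormedAddCommGroup E]
    [NormedSpace ℝ E] (S : Submodule ℝ E) (x : E)
    (hx : x ∉ closure (S : Set E)) :
    ∃ f : E →L[ℝ] ℝ, (∀ b ∈ S, f b = 0) ∧ f x ≠ 0 := by
  obtain ⟨f, u, hb, hxu⟩ :=
    geometric_hahn_banach_closed_point (S.convex.closure) isClosed_closure hx
  have hu : 0 < u := by simpa using hb 0 (subset_closure S.zero_mem)
  have h0 : ∀ b ∈ S, f b = 0 := by
    intro b hbS
    by_contra h
    have h1 := hb (((u + 1) / f b) • b) (subset_closure (S.smul_mem _ hbS))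
    rw [map_smul, smul_eq_mul, div_mul_cancel₀ _ h] at h1
    linarith
  exact ⟨f, h0, by intro h; rw [h] at hxu; linarith⟩

/-- Membership in the closure of the pulled-back submodule, in terms of the ambient closure. -/
lemma mem_closure_comap_iff {E : Type*} [NormedAddCommGroup E] [NormedSpace ℝ E]
    (A B : Submodule ℝ E) (hBA : B ≤ A) (a : A) :
    a ∈ (B.comap A.subtype).topologicalClosure ↔ (a : E) ∈ closure (B : Set E) := by
  have h1 : a ∈ (B.comap A.subtype).topologicalClosure ↔
      (a : A) ∈ closure ((B.comap A.subtype : Submodule ℝ A) : Set A) := Iff.rfl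
  rw [h1, closure_subtype]
  have h2 : (Subtype.val '' ((B.comap A.subtype : Submodule ℝ A) : Set A)) = (B : Set E) := by
    ext x
    simp only [Set.mem_image, SetLike.mem_coe, Submodule.mem_comap, Submodule.subtype_apply]
    exact ⟨fun ⟨y, hy, hxy⟩ => hxy ▸ hy, fun hx => ⟨⟨x, hBA hx⟩, hx, rfl⟩⟩
  rw [h2]

/-- Let `X₀`, `X₁` be real Banach spaces and `I : X₀ × X₁ → ℝ` a continuous
bilinear map such that both induced maps `X₁ → X₀*` and `X₀ → X₁*` are surjective.  Let
`B₀ ⊆ X₀`, `B₁ ⊆ X₁` be linear subspaces, `A₀ := B₁^⊥`, `A₁ := B₀^⊥`, and assume `B₀ ⊆ A₀`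
and `B₁ ⊆ A₁`.  Then the induced pairing `Ī : (A₀ / closure B₀) × (A₁ / closure B₁) → ℝ`,
`Ī([a],[α]) = I(a,α)`, is well defined, continuous, and nondegenerate. -/
theorem quotient_pairing_duality
    [CompleteSpace X₀] [CompleteSpace X₁]
    (I : X₀ →L[ℝ] X₁ →L[ℝ] ℝ)
    (hsurj₁ : Function.Surjective (⇑I.flip : X₁ → (X₀ →L[ℝ] ℝ)))
    (hsurj₀ : Function.Surjective (⇑I : X₀ → (X₁ →L[ℝ] ℝ)))
    (B₀ : Submodule ℝ X₀) (B₁ : Submodule ℝ X₁)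
    (A₀ : Submodule ℝ X₀) (A₁ : Submodule ℝ X₁)
    (hA₀ : A₀ = annLeft I (B₁ : Set X₁)) (hA₁ : A₁ = annRight I (B₀ : Set X₀))
    (hB₀ : B₀ ≤ A₀) (hB₁ : B₁ ≤ A₁) :
    ∃ Ibar : (A₀ ⧸ (B₀.comap A₀.subtype).topologicalClosure) →ₗ[ℝ]
        (A₁ ⧸ (B₁.comap A₁.subtype).topologicalClosure) →ₗ[ℝ] ℝ,
      (∀ (a : A₀) (α : A₁),
        Ibar (Submodule.Quotient.mk a) (Submodule.Quotient.mk α) = I (a : X₀) (α : X₁)) ∧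
      Continuous (fun p : (A₀ ⧸ (B₀.comap A₀.subtype).topologicalClosure) ×
          (A₁ ⧸ (B₁.comap A₁.subtype).topologicalClosure) => Ibar p.1 p.2) ∧
      (∀ a : A₀, (Submodule.Quotient.mk a : A₀ ⧸ (B₀.comap A₀.subtype).topologicalClosure) ≠ 0 →
        ∃ α : A₁, Ibar (Submodule.Quotient.mk a) (Submodule.Quotient.mk α) ≠ 0) ∧
      (∀ α : A₁, (Submodule.Quotient.mk α : A₁ ⧸ (B₁.comap A₁.subtype).topologicalClosure) ≠ 0 →
        ∃ a : A₀, Ibar (Submodule.Quotient.mk a) (Submodule.Quotient.mk α) ≠ 0) := by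
  classical
  set N₀ := (B₀.comap A₀.subtype).topologicalClosure with hN₀
  set N₁ := (B₁.comap A₁.subtype).topologicalClosure with hN₁
  -- the restricted bilinear form
  have ker₂ : ∀ (a : A₀), ∀ α ∈ N₁, I (a : X₀) (α : A₁) = 0 := by
    intro a α hα
    obtain ⟨x, hx⟩ := a
    rw [hA₀] at hx
    let f : A₁ →L[ℝ] ℝ := (I x).comp A₁.subtypeL
    have hle : B₁.comap A₁.subtype ≤ f.ker := by
      intro β hβ
      exact hx (β : X₁) hβ
    have := (B₁.comap A₁.subtype).topologicalClosure_minimal hle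
      (ContinuousLinearMap.isClosed_ker f)
    exact this hα
  have ker₁ : ∀ a ∈ N₀, ∀ (α : A₁), I (a : A₀) (α : X₁) = 0 := by
    intro a ha α
    obtain ⟨y, hy⟩ := α
    rw [hA₁] at hy
    let f : A₀ →L[ℝ] ℝ := (I.flip y).comp A₀.subtypeL
    have hle : B₀.comap A₀.subtype ≤ f.ker := by
      intro b hb
      exact hy (b : X₀) hb
    have := (B₀.comap A₀.subtype).topologicalClosure_minimal hle
      (ContinuousLinearMap.isClosed_ker f)
    exact this ha
  -- bilinear map on A₀ × A₁
  let J : A₀ →ₗ[ℝ] A₁ →ₗ[ℝ] ℝ :=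
    LinearMap.mk₂ ℝ (fun a α => I (a : X₀) (α : X₁))
      (fun a b α => by simp) (fun c a α => by simp)
      (fun a α β => by simp) (fun c a α => by simp)
  have hkerJ : ∀ a : A₀, N₁ ≤ LinearMap.ker (J a) := fun a α hα => ker₂ a α hα
  let K : A₀ →ₗ[ℝ] ((A₁ ⧸ N₁) →ₗ[ℝ] ℝ) :=
    { toFun := fun a => N₁.liftQ (J a) (hkerJ a)
      map_add' := by
        intro a b
        refine LinearMap.ext fun q => ?_
        obtain ⟨α, rfl⟩ := Submodule.Quotient.mk_surjective _ q
        simp [Submodule.liftQ_apply]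
      map_smul' := by
        intro c a
        refine LinearMap.ext fun q => ?_
        obtain ⟨α, rfl⟩ := Submodule.Quotient.mk_surjective _ q
        simp [Submodule.liftQ_apply] }
  have hkerK : N₀ ≤ LinearMap.ker K := by
    intro a ha
    refine LinearMap.mem_ker.mpr (LinearMap.ext fun q => ?_)
    obtain ⟨α, rfl⟩ := Submodule.Quotient.mk_surjective _ q
    simpa [K, J, Submodule.liftQ_apply] using ker₁ a ha α
  refine ⟨N₀.liftQ K hkerK, fun a α => rfl, ?_, ?_, ?_⟩
  · -- continuity
    rw [← (N₀.isOpenQuotientMap_mkQ.prodMap N₁.isOpenQuotientMap_mkQ).continuous_comp_iff]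
    have : (fun p : (A₀ ⧸ N₀) × (A₁ ⧸ N₁) => N₀.liftQ K hkerK p.1 p.2) ∘
        Prod.map N₀.mkQ N₁.mkQ = fun q : A₀ × A₁ => I (q.1 : X₀) (q.2 : X₁) := rfl
    rw [this]
    exact I.continuous₂.comp
      ((continuous_subtype_val.comp continuous_fst).prodMk
        (continuous_subtype_val.comp continuous_snd))
  · -- nondegeneracy, first slot
    intro a ha
    have hnc : (a : X₀) ∉ closure (B₀ : Set X₀) := by
      intro hc
      apply ha
      rw [Submodule.Quotient.mk_eq_zero]
      exact (mem_closure_comap_iff _ B₀ hB₀ a).2 hc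
    obtain ⟨f, hf0, hfa⟩ := exists_functional_of_notMem_closure B₀ (a : X₀) hnc
    obtain ⟨y, rfl⟩ := hsurj₁ f
    have hy : y ∈ A₁ := by
      rw [hA₁]
      exact fun x hx => hf0 x hx
    exact ⟨⟨y, hy⟩, hfa⟩
  · -- nondegeneracy, second slot
    intro α hα
    have hnc : (α : X₁) ∉ closure (B₁ : Set X₁) := by
      intro hc
      apply hα
      rw [Submodule.Quotient.mk_eq_zero]
      exact (mem_closure_comap_iff _ B₁ hB₁ α).2 hc
    obtain ⟨f, hf0, hfα⟩ := exists_functional_of_notMem_closure B₁ (α : X₁) hnc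
    obtain ⟨x, rfl⟩ := hsurj₀ f
    have hx : x ∈ A₀ := by
      rw [hA₀]
      exact fun y hy => hf0 y hy
    exact ⟨⟨x, hx⟩, hfα⟩

end
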